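/- Let Γ, Γ' be simple subsystems of a finite root system Φ with W_{Γ'} ⊆ W_Γ and Φ_{Γ',+} ⊆ Φ_{Γ,+}. Then the fundamental chamber of Γ' is the union over all w in the set of minimal length left coset representatives {w ∈ W_Γ : w⁻¹(Γ') ⊆ Φ_{W_Γ,+}} of the images w(C_Γ) of the fundamental chamber of Γ: C_{Γ'} = ⋃_w w(C_Γ). -/

import Mathlib

open scoped RealInnerProductSpace

variable {V : Type*} [NormedAddCommGroup V] [InnerProductSpace ℝ V] [FiniteDimensional ℝ V]

/-- Orthogonal reflection in the (nonzero) vector `α`. -/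
noncomputable def sref (α : V) : V ≃ₗᵢ[ℝ] V := Submodule.reflection (ℝ ∙ α)ᗮ

/-- The cone of nonnegative linear combinations of a finite set `Pi`. -/
def posCone (Pi : Finset V) : Set V :=
  {v | ∃ c : V → ℝ, (∀ x, 0 ≤ c x) ∧ v = ∑ x ∈ Pi, c x • x}

/-- The reflection group generated by the reflections in the roots of `Φ`. -/
noncomputable def Wgroup (Φ : Set V) : Subgroup (V ≃ₗᵢ[ℝ] V) :=
  Subgroup.closure {g | ∃ α ∈ Φ, g = sref α}

/-- The fundamental chamber of the reflection subgroup (given as a set of isometries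
`Wsub`), with respect to its positive system inherited from `Φ₊ = Φ ∩ posCone Pi`. -/
def chamber (Φ : Set V) (Pi : Finset V) (Wsub : Set (V ≃ₗᵢ[ℝ] V)) : Set V :=
  {u | ∀ α ∈ Φ, sref α ∈ Wsub → α ∈ posCone Pi → 0 ≤ ⟪u, α⟫}

/-- Pointwise stabilizer in `W` of the first `m` coordinates of the tuple `v`. -/
def stabSet (Φ : Set V) {n : ℕ} (v : Fin n → V) (m : ℕ) : Set (V ≃ₗᵢ[ℝ] V) :=
  {w | w ∈ Wgroup Φ ∧ ∀ i : Fin n, (i : ℕ) < m → w (v i) = v i}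

/-- The fundamental region `C⁽ⁿ⁾` for the diagonal `W`-action on `Vⁿ`. -/
def Cfund (Φ : Set V) (Pi : Finset V) (n : ℕ) : Set (Fin n → V) :=
  {v | ∀ m : Fin n, v m ∈ chamber Φ Pi (stabSet Φ v (m : ℕ))}

set_option linter.unusedSectionVars false

lemma sref_apply (α v : V) : sref α v = v - (2 * ⟪α, v⟫ / (‖α‖ ^ 2)) • α := by
  rw [sref, Submodule.reflection_orthogonal_apply, Submodule.reflection_singleton_apply]
  simp only [RCLike.ofReal_real_eq_id, id_eq, Function.id_def]
  rw [neg_sub, two_smul]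
  module

lemma sref_symm (α : V) : (sref α).symm = sref α := by
  rw [sref, Submodule.reflection_symm]

lemma sref_conj (w : V ≃ₗᵢ[ℝ] V) (α : V) (v : V) : sref (w α) v = w (sref α (w.symm v)) := by
  rw [sref_apply, sref_apply, map_sub, map_smul, w.apply_symm_apply, w.norm_map,
    ← w.inner_map_map α (w.symm v), w.apply_symm_apply]

lemma sref_conj' (w : V ≃ₗᵢ[ℝ] V) (α : V) : sref (w.symm α) = w⁻¹ * sref α * w := by
  ext v
  have := sref_conj w.symm α v
  rw [LinearIsometryEquiv.symm_symm] at this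
  rw [this]
  simp [LinearIsometryEquiv.coe_mul, LinearIsometryEquiv.coe_inv]

/-- Members of `Wgroup S` fix vectors orthogonal to `S`. -/
lemma Wgroup_fix {S : Set V} {w : V ≃ₗᵢ[ℝ] V} (hw : w ∈ Wgroup S) {v : V}
    (hv : ∀ γ ∈ S, ⟪γ, v⟫ = 0) : w v = v := by
  induction hw using Subgroup.closure_induction with
  | mem g hg =>
      obtain ⟨α, hα, rfl⟩ := hg
      rw [sref_apply, hv α hα]
      simp
  | one => simp
  | mul a b _ _ ha hb =>
      rw [LinearIsometryEquiv.coe_mul, Function.comp_apply, hb, ha]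
  | inv a _ ha =>
      rw [LinearIsometryEquiv.coe_inv]
      conv_lhs => rw [← ha]
      exact a.symm_apply_apply v

/-- Members of `Wgroup S` (with `S ⊆ Φ`) preserve `Φ`. -/
lemma Wgroup_maps {Φ : Set V} (hrefl : ∀ α ∈ Φ, ∀ β ∈ Φ, sref α β ∈ Φ)
    {S : Set V} (hS : S ⊆ Φ) {w : V ≃ₗᵢ[ℝ] V} (hw : w ∈ Wgroup S) :
    (∀ α ∈ Φ, w α ∈ Φ) ∧ (∀ α ∈ Φ, w.symm α ∈ Φ) := by
  induction hw using Subgroup.closure_induction with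
  | mem g hg =>
      obtain ⟨α, hα, rfl⟩ := hg
      exact ⟨fun β hβ => hrefl α (hS hα) β hβ,
        fun β hβ => by rw [sref_symm]; exact hrefl α (hS hα) β hβ⟩
  | one =>
      refine ⟨fun β hβ => by simpa using hβ, fun β hβ => ?_⟩
      have : (1 : V ≃ₗᵢ[ℝ] V).symm β = β := rfl
      rwa [this]
  | mul a b _ _ ha hb =>
      refine ⟨fun β hβ => ?_, fun β hβ => ?_⟩
      · rw [LinearIsometryEquiv.coe_mul, Function.comp_apply]
        exact ha.1 _ (hb.1 _ hβ)
      · show (a * b).symm β ∈ Φ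
        have : (a * b).symm β = b.symm (a.symm β) := rfl
        rw [this]
        exact hb.2 _ (ha.2 _ hβ)
  | inv a _ ha =>
      refine ⟨fun β hβ => ?_, fun β hβ => ?_⟩
      · rw [LinearIsometryEquiv.coe_inv]; exact ha.2 _ hβ
      · have : (a⁻¹).symm β = a β := rfl
        rw [this]; exact ha.1 _ hβ

/-- A linearly independent finite family has a "dual" vector. -/
lemma exists_dual_vec (Γ : Finset V)
    (hind : LinearIndependent ℝ (fun x : {x : V // x ∈ Γ} => (x : V))) :
    ∃ u : V, ∀ γ ∈ Γ, ⟪u, γ⟫ = 1 := by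
  classical
  have hind' : LinearIndepOn ℝ id (Γ : Set V) := hind
  let b : Module.Basis _ ℝ V := Module.Basis.extend hind'
  let L : V →ₗ[ℝ] ℝ :=
    ∑ γ ∈ Γ.attach, b.coord ⟨γ.1, hind'.subset_extend _ (Finset.mem_coe.mpr γ.2)⟩
  refine ⟨(InnerProductSpace.toDual ℝ V).symm (LinearMap.toContinuousLinearMap L), ?_⟩
  intro γ hγ
  rw [InnerProductSpace.toDual_symm_apply]
  show L γ = 1
  set i : ↥(hind'.extend (Set.subset_univ _)) :=
    ⟨γ, hind'.subset_extend _ (Finset.mem_coe.mpr hγ)⟩ with hi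
  have hγb : γ = b i := (Module.Basis.extend_apply_self hind' i).symm
  rw [LinearMap.sum_apply, Finset.sum_eq_single (⟨γ, hγ⟩ : {x // x ∈ Γ})]
  · show (b.coord i) γ = 1
    rw [hγb, Module.Basis.coord_apply, Module.Basis.repr_self, Finsupp.single_apply, if_pos rfl]
  · intro x _ hx
    rw [hγb, Module.Basis.coord_apply, Module.Basis.repr_self, Finsupp.single_apply, if_neg]
    intro h
    apply hx
    apply Subtype.ext
    have h2 := congrArg Subtype.val h
    simpa [hi] using h2.symm
  · intro h; exact absurd (Finset.mem_attach _ _) h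

/-- The reflection group of a subset `Γ ⊆ Φ` is finite. -/
lemma Wgroup_finite {Φ : Set V} (hfin : Φ.Finite)
    (hrefl : ∀ α ∈ Φ, ∀ β ∈ Φ, sref α β ∈ Φ) (Γ : Finset V) (hΓΦ : (Γ : Set V) ⊆ Φ) :
    {w : V ≃ₗᵢ[ℝ] V | w ∈ Wgroup (Γ : Set V)}.Finite := by
  classical
  set K := Submodule.span ℝ (Γ : Set V) with hK
  have hinj : Set.InjOn (fun (w : V ≃ₗᵢ[ℝ] V) => fun γ : {x // x ∈ Γ} => w γ.1)
      {w : V ≃ₗᵢ[ℝ] V | w ∈ Wgroup (Γ : Set V)} := by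
    intro w1 hw1 w2 hw2 h
    have hΓeq : ∀ γ ∈ Γ, w1 γ = w2 γ := fun γ hγ => congrFun h ⟨γ, hγ⟩
    have hspan : ∀ x ∈ K, w1 x = w2 x := by
      intro x hx
      induction hx using Submodule.span_induction with
      | mem x hx => exact hΓeq x hx
      | zero => simp
      | add x y _ _ hx hy => rw [map_add, map_add, hx, hy]
      | smul c x _ hx => rw [map_smul, map_smul, hx]
    ext v
    have hq : ∀ γ ∈ (Γ : Set V), ⟪γ, v - (K.orthogonalProjectionOnto v : V)⟫ = 0 := by
      intro γ hγ
      exact (Submodule.mem_orthogonal K _).mp (K.sub_starProjection_mem_orthogonal v)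
        γ (Submodule.subset_span hγ)
    have h1 := Wgroup_fix hw1 hq
    have h2 := Wgroup_fix hw2 hq
    have hv : v = (K.orthogonalProjectionOnto v : V) + (v - (K.orthogonalProjectionOnto v : V)) := by abel
    rw [hv, map_add, map_add, h1, h2, hspan _ (K.orthogonalProjectionOnto v).2]
  have himg : (fun (w : V ≃ₗᵢ[ℝ] V) => fun γ : {x // x ∈ Γ} => w γ.1) ''
      {w : V ≃ₗᵢ[ℝ] V | w ∈ Wgroup (Γ : Set V)} ⊆ Set.pi Set.univ (fun _ => Φ) := by
    rintro f ⟨w, hw, rfl⟩ γ _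
    exact (Wgroup_maps hrefl hΓΦ hw).1 γ.1 (hΓΦ (Finset.mem_coe.mpr γ.2))
  exact Set.Finite.of_finite_image ((Set.Finite.pi (fun _ => hfin)).subset himg) hinj

/-- Every vector can be moved into the fundamental chamber by some `w ∈ W_Γ`. -/
lemma exists_rep {Φ : Set V} (hfin : Φ.Finite)
    (hrefl : ∀ α ∈ Φ, ∀ β ∈ Φ, sref α β ∈ Φ) (h0 : (0 : V) ∉ Φ)
    (Γ : Finset V) (hΓΦ : (Γ : Set V) ⊆ Φ) (u0 : V) (hu0 : ∀ γ ∈ Γ, ⟪u0, γ⟫ = 1)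
    (x : V) :
    ∃ w ∈ Wgroup (Γ : Set V), ∀ γ ∈ Γ, 0 ≤ ⟪w.symm x, γ⟫ := by
  classical
  have hWfin := Wgroup_finite hfin hrefl Γ hΓΦ
  obtain ⟨Wf, hWf⟩ := hWfin.exists_finset_coe
  have h1W : (1 : V ≃ₗᵢ[ℝ] V) ∈ Wf := by rw [← Finset.mem_coe, hWf]; exact Set.mem_setOf.mpr ((Wgroup (Γ : Set V)).one_mem)
  obtain ⟨w, hwW, hmax⟩ := Wf.exists_max_image (fun w => ⟪x, w u0⟫) ⟨1, h1W⟩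
  have hwW' : w ∈ Wgroup (Γ : Set V) := by rw [← Finset.mem_coe, hWf] at hwW; exact hwW
  refine ⟨w, hwW', ?_⟩
  intro γ hγ
  have hγ0 : γ ≠ 0 := fun h => h0 (h ▸ hΓΦ (Finset.mem_coe.mpr hγ))
  have hsγ : sref γ ∈ Wgroup (Γ : Set V) :=
    Subgroup.subset_closure ⟨γ, Finset.mem_coe.mpr hγ, rfl⟩
  have hw' : w * sref γ ∈ Wf := by
    rw [← Finset.mem_coe, hWf]; exact (Wgroup (Γ : Set V)).mul_mem hwW' hsγ
  have hle := hmax _ hw'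
  have hcomp : (w * sref γ) u0 = w u0 - (2 / ‖γ‖ ^ 2) • w γ := by
    rw [LinearIsometryEquiv.coe_mul, Function.comp_apply, sref_apply,
      real_inner_comm u0 γ, hu0 γ hγ, map_sub, map_smul]
    norm_num
  rw [hcomp, inner_sub_right, real_inner_smul_right] at hle
  have hnγ : ‖γ‖ ≠ 0 := norm_ne_zero_iff.mpr hγ0
  have hpos : (0 : ℝ) < 2 / ‖γ‖ ^ 2 := by positivity
  have h2 : 0 ≤ ⟪x, w γ⟫ := by
    by_contra hneg
    push_neg at hneg
    nlinarith
  have : ⟪w.symm x, γ⟫ = ⟪x, w γ⟫ := by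
    rw [← w.inner_map_map (w.symm x) γ, w.apply_symm_apply]
  rw [this]; exact h2

/-- If `Γ, Γ'` are simple subsystems of `Φ` with `W_{Γ'} ⊆ W_Γ` and
`Φ_{Γ',+} ⊆ Φ_{Γ,+}`, then `C_{Γ'}` is the union of the images `w(C_Γ)` over the
minimal coset representatives `w ∈ W_Γ` with `w⁻¹(Γ') ⊆ Φ_{W_Γ,+}`. -/
theorem chamber_union_of_cosets (Φ : Set V) (Γ Γ' : Finset V)
    (hfin : Φ.Finite) (h0 : (0 : V) ∉ Φ)
    (hrefl : ∀ α ∈ Φ, ∀ β ∈ Φ, sref α β ∈ Φ)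
    (hred : ∀ α ∈ Φ, ∀ c : ℝ, c • α ∈ Φ → c = 1 ∨ c = -1)
    -- Γ is a simple subsystem of Φ
    (hΓΦ : (Γ : Set V) ⊆ Φ)
    (hΓind : LinearIndependent ℝ (fun x : {x : V // x ∈ Γ} => (x : V)))
    (hΓsplit : ∀ α ∈ Φ, sref α ∈ Wgroup (Γ : Set V) →
      α ∈ posCone Γ ∨ -α ∈ posCone Γ)
    -- Γ' is a simple subsystem of Φ
    (hΓ'Φ : (Γ' : Set V) ⊆ Φ)
    (hΓ'ind : LinearIndependent ℝ (fun x : {x : V // x ∈ Γ'} => (x : V)))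
    (hΓ'split : ∀ α ∈ Φ, sref α ∈ Wgroup (Γ' : Set V) →
      α ∈ posCone Γ' ∨ -α ∈ posCone Γ')
    -- W_{Γ'} ⊆ W_Γ
    (hWsub : Wgroup (Γ' : Set V) ≤ Wgroup (Γ : Set V))
    -- Φ_{Γ',+} ⊆ Φ_{Γ,+}
    (hpos : {α | α ∈ Φ ∧ sref α ∈ Wgroup (Γ' : Set V) ∧ α ∈ posCone Γ'}
       ⊆ {α | α ∈ Φ ∧ sref α ∈ Wgroup (Γ : Set V) ∧ α ∈ posCone Γ}) :
    {v : V | ∀ γ ∈ Γ', 0 ≤ ⟪v, γ⟫}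
      = ⋃ w ∈ {w : V ≃ₗᵢ[ℝ] V | w ∈ Wgroup (Γ : Set V) ∧ ∀ γ ∈ Γ',
            w.symm γ ∈ {α | α ∈ Φ ∧ sref α ∈ Wgroup (Γ : Set V) ∧ α ∈ posCone Γ}},
          (fun x => w x) '' {v : V | ∀ γ ∈ Γ, 0 ≤ ⟪v, γ⟫} := by
  classical
  obtain ⟨u0, hu0⟩ := exists_dual_vec Γ hΓind
  obtain ⟨u1, hu1⟩ := exists_dual_vec Γ' hΓ'ind
  ext v
  simp only [Set.mem_setOf_eq, Set.mem_iUnion, Set.mem_image]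
  constructor
  · intro hv
    set t : ℕ → ℝ := fun n => 1 / (n + 1) with ht
    have htpos : ∀ n, 0 < t n := fun n => by positivity
    set x : ℕ → V := fun n => v + t n • u1 with hx
    have hex : ∀ n : ℕ, ∃ w ∈ Wgroup (Γ : Set V), ∀ γ ∈ Γ, 0 ≤ ⟪w.symm (x n), γ⟫ :=
      fun n => exists_rep hfin hrefl h0 Γ hΓΦ u0 hu0 (x n)
    choose f hf1 hf2 using hex
    have hWfin := Wgroup_finite hfin hrefl Γ hΓΦ
    haveI := hWfin.to_subtype
    set g : ℕ → ↥{w : V ≃ₗᵢ[ℝ] V | w ∈ Wgroup (Γ : Set V)} :=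
      fun n => ⟨f n, hf1 n⟩ with hg
    obtain ⟨y, hy⟩ := Finite.exists_infinite_fiber g
    have hs : (g ⁻¹' {y}).Infinite := Set.infinite_coe_iff.mp hy
    set w : V ≃ₗᵢ[ℝ] V := (y : V ≃ₗᵢ[ℝ] V) with hw
    have hfixw : ∀ n ∈ g ⁻¹' {y}, f n = w := by
      intro n hn
      have : g n = y := hn
      exact congrArg Subtype.val this
    obtain ⟨n0, hn0⟩ := hs.nonempty
    have hwW : w ∈ Wgroup (Γ : Set V) := y.2
    refine ⟨w, ⟨hwW, ?_⟩, ?_⟩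
    · -- coset representative condition
      intro γ' hγ'
      have hγ'Φ : γ' ∈ Φ := hΓ'Φ (Finset.mem_coe.mpr hγ')
      have hβΦ : w.symm γ' ∈ Φ := (Wgroup_maps hrefl hΓΦ hwW).2 _ hγ'Φ
      have hsγ' : sref γ' ∈ Wgroup (Γ' : Set V) :=
        Subgroup.subset_closure ⟨γ', Finset.mem_coe.mpr hγ', rfl⟩
      have hsβ : sref (w.symm γ') ∈ Wgroup (Γ : Set V) := by
        rw [sref_conj']
        exact mul_mem (mul_mem (inv_mem hwW) (hWsub hsγ')) hwW
      have hip : 0 < ⟪x n0, γ'⟫ := by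
        rw [hx]
        simp only [inner_add_left, real_inner_smul_left]
        rw [hu1 γ' hγ']
        have := hv γ' hγ'
        have := htpos n0
        linarith
      have hchn : ∀ γ ∈ Γ, 0 ≤ ⟪w.symm (x n0), γ⟫ := by
        rw [← hfixw n0 hn0]; exact hf2 n0
      rcases hΓsplit _ hβΦ hsβ with hpc | hneg
      · exact ⟨hβΦ, hsβ, hpc⟩
      · exfalso
        obtain ⟨c, hc, hcsum⟩ := hneg
        have hge : 0 ≤ ⟪w.symm (x n0), -(w.symm γ')⟫ := by
          rw [hcsum, inner_sum]
          refine Finset.sum_nonneg fun γ hγ => ?_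
          rw [real_inner_smul_right]
          exact mul_nonneg (hc γ) (hchn γ hγ)
        rw [inner_neg_right, w.symm.inner_map_map] at hge
        linarith
    · -- v is in the image of the chamber
      refine ⟨w.symm v, ?_, w.apply_symm_apply v⟩
      intro γ hγ
      set a : ℝ := ⟪w.symm v, γ⟫ with ha
      set b : ℝ := ⟪w.symm u1, γ⟫ with hb
      have key : ∀ n ∈ g ⁻¹' {y}, 0 ≤ a + t n * b := by
        intro n hn
        have h2 := hf2 n γ hγ
        rw [hfixw n hn] at h2
        rw [hx] at h2
        simpa [map_add, map_smul, inner_add_left, real_inner_smul_left, ha, hb] using h2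
      by_contra hneg
      push_neg at hneg
      have hna : 0 < -a := by linarith
      obtain ⟨N, hN⟩ := exists_nat_gt ((|b| + 1) / (-a))
      obtain ⟨n, hn, hNn⟩ := hs.exists_gt N
      have hn1 : (0 : ℝ) < (n : ℝ) + 1 := by positivity
      have hlt : (|b| + 1) / (-a) < (n : ℝ) + 1 := by
        have : (N : ℝ) < (n : ℝ) := by exact_mod_cast hNn
        linarith
      have hlt2 : |b| + 1 < ((n : ℝ) + 1) * (-a) := by
        rwa [div_lt_iff₀ hna] at hlt
      have htn : t n = 1 / ((n : ℝ) + 1) := rfl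
      have h3 : t n * (|b| + 1) < -a := by
        rw [htn]
        rw [div_mul_eq_mul_div, one_mul, div_lt_iff₀ hn1]
        linarith
      have h4 : t n * b ≤ t n * |b| :=
        mul_le_mul_of_nonneg_left (le_abs_self b) (le_of_lt (htpos n))
      have h5 : t n * |b| ≤ t n * (|b| + 1) :=
        mul_le_mul_of_nonneg_left (by linarith) (le_of_lt (htpos n))
      have := key n hn
      linarith
  · rintro ⟨w, ⟨hwW, hrep⟩, u, hu, rfl⟩
    intro γ hγ
    have : ⟪w u, γ⟫ = ⟪u, w.symm γ⟫ := by
      conv_lhs => rw [← w.apply_symm_apply γ]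
      exact w.inner_map_map u (w.symm γ)
    rw [this]
    obtain ⟨-, -, c, hc, hcsum⟩ := hrep γ hγ
    rw [hcsum, inner_sum]
    refine Finset.sum_nonneg fun z hz => ?_
    rw [real_inner_smul_right]
    exact mul_nonneg (hc z) (hu z hz)
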